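/- Let F ⊂ ℂⁿ be a Kobayashi hyperbolic closed region (e.g., satisfying: for each d > 0 there is r(d) > 0 bounding the radius of holomorphic disks it contains). If h : Δ_r(0) → F is holomorphic with ‖h'(0)‖ = 1, then r ≤ r(d). Conversely, if the sublevel set F_d := {(z,w) ∈ ℂ² : Ψ(z,w) < 2d} of the constructed function Ψ has this property for every d > 0, then the rigid domain Ω_Ψ := {(z,w,ζ) ∈ ℂ³ : Re ζ > Ψ(z,w)} is Kobayashi hyperbolic. -/

import Mathlib

open Metric Set

noncomputable def kob {E : Type*} [NormedAddCommGroup E] [NormedSpace ℂ E]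
    (Ω : Set E) (z v : E) : ℝ :=
  sInf {c : ℝ | ∃ r : ℝ, 0 < r ∧ c = 1 / r ∧ ∃ f : ℂ → E,
    DifferentiableOn ℂ f (ball (0 : ℂ) r) ∧ f 0 = z ∧ deriv f 0 = v ∧
    MapsTo f (ball (0 : ℂ) r) Ω}

/-- A set `Ω` is Kobayashi hyperbolic if around every point the Kobayashi
pseudometric admits a positive lower bound comparable to the norm. -/
def KobayashiHyperbolic {E : Type*} [NormedAddCommGroup E] [NormedSpace ℂ E]
    (Ω : Set E) : Prop :=
  ∀ p ∈ Ω, ∃ U ∈ nhds p, ∃ c > 0, ∀ q ∈ U ∩ Ω, ∀ v : E, c * ‖v‖ ≤ kob Ω q v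

/-- Sub-mean value inequality on all closed disks contained in `S`. -/
def SubmeanOn (u : ℂ → ℝ) (S : Set ℂ) : Prop :=
  ∀ c : ℂ, ∀ s : ℝ, 0 < s → closedBall c s ⊆ S →
    u c ≤ (2 * Real.pi)⁻¹ *
      ∫ θ in (0 : ℝ)..(2 * Real.pi), u (c + (s : ℂ) * Complex.exp ((θ : ℂ) * Complex.I))

def SubharmonicOn (u : ℂ → ℝ) (S : Set ℂ) : Prop :=
  UpperSemicontinuousOn u S ∧ SubmeanOn u S

/-- Plurisubharmonic: upper semicontinuous and subharmonic on every complex line. -/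
def PSHOn {E : Type*} [NormedAddCommGroup E] [NormedSpace ℂ E]
    (u : E → ℝ) (Ω : Set E) : Prop :=
  UpperSemicontinuousOn u Ω ∧
    ∀ a b : E, SubmeanOn (fun lam : ℂ => u (a + lam • b)) {lam : ℂ | a + lam • b ∈ Ω}


/-- Half-plane Schwarz estimates: if `ζ` maps `ball 0 r` holomorphically into the
right half-plane, then `‖ζ'(0)‖ * r ≤ 2 Re ζ(0)` and `Re ζ ≤ 2 Re ζ(0)` on `ball 0 (r/3)`. -/
lemma halfplane_est {r : ℝ} (hr : 0 < r) (ζ : ℂ → ℂ)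
    (hd : DifferentiableOn ℂ ζ (ball (0 : ℂ) r))
    (hpos : ∀ lam ∈ ball (0 : ℂ) r, 0 < (ζ lam).re) :
    ‖deriv ζ 0‖ * r ≤ 2 * (ζ 0).re ∧
      ∀ lam ∈ ball (0 : ℂ) (r / 3), (ζ lam).re ≤ 2 * (ζ 0).re := by
  have h0 : (0 : ℂ) ∈ ball (0 : ℂ) r := mem_ball_self hr
  set a : ℂ := ζ 0 with ha
  have hdpos : 0 < a.re := hpos 0 h0
  have hden : ∀ lam ∈ ball (0 : ℂ) r, ζ lam + (starRingEnd ℂ) a ≠ 0 := by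
    intro lam hlam h
    have h1 : 0 < (ζ lam + (starRingEnd ℂ) a).re := by
      simp only [Complex.add_re, Complex.conj_re]
      linarith [hpos lam hlam]
    rw [h] at h1; simp at h1
  set g : ℂ → ℂ := fun lam => (ζ lam - a) / (ζ lam + (starRingEnd ℂ) a) with hg
  have hg0 : g 0 = 0 := by simp [hg, ← ha]
  have hgd : DifferentiableOn ℂ g (ball 0 r) :=
    (hd.sub_const a).div (hd.add_const _) hden
  have hnormlt : ∀ lam ∈ ball (0 : ℂ) r, ‖ζ lam - a‖ < ‖ζ lam + (starRingEnd ℂ) a‖ := by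
    intro lam hlam
    have h2 := hpos lam hlam
    apply lt_of_pow_lt_pow_left₀ 2 (norm_nonneg _)
    rw [Complex.sq_norm, Complex.sq_norm,
      Complex.normSq_apply, Complex.normSq_apply]
    simp only [Complex.sub_re, Complex.sub_im, Complex.add_re, Complex.add_im,
      Complex.conj_re, Complex.conj_im]
    nlinarith [mul_pos h2 hdpos]
  have hmaps : MapsTo g (ball (0 : ℂ) r) (ball (g 0) 1) := by
    rw [hg0]
    intro lam hlam
    rw [mem_ball_zero_iff, hg, norm_div,
      div_lt_one (lt_of_le_of_lt (norm_nonneg _) (hnormlt lam hlam))]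
    exact hnormlt lam hlam
  have h2d : a + (starRingEnd ℂ) a = ((2 * a.re : ℝ) : ℂ) := Complex.add_conj a
  have h2dne : ((2 * a.re : ℝ) : ℂ) ≠ 0 := by
    simp only [ne_eq, Complex.ofReal_eq_zero]
    positivity
  have hζ0 : HasDerivAt ζ (deriv ζ 0) 0 :=
    (hd.differentiableAt (isOpen_ball.mem_nhds h0)).hasDerivAt
  have hga : HasDerivAt g ((deriv ζ 0 * (a + (starRingEnd ℂ) a) -
      (a - a) * deriv ζ 0) / (a + (starRingEnd ℂ) a) ^ 2) 0 := by
    have := (hζ0.sub_const a).div (hζ0.add_const ((starRingEnd ℂ) a))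
      (by rw [← ha]; exact hden 0 h0)
    rw [← ha] at this; exact this
  have hgderiv : deriv g 0 = deriv ζ 0 / ((2 * a.re : ℝ) : ℂ) := by
    rw [hga.deriv, h2d, div_eq_div_iff (pow_ne_zero 2 h2dne) h2dne]
    ring
  have hbound := Complex.norm_deriv_le_div_of_mapsTo_ball hgd (hmaps.mono_right ball_subset_closedBall) hr
  rw [hgderiv] at hbound
  have hnorm2d : ‖((2 * a.re : ℝ) : ℂ)‖ = 2 * a.re := by
    rw [Complex.norm_real, Real.norm_of_nonneg (by linarith)]
  have hb2 : ‖deriv ζ 0‖ / (2 * a.re) ≤ 1 / r := by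
    rwa [norm_div, hnorm2d] at hbound
  constructor
  · have := (div_le_div_iff₀ (by linarith) hr).mp hb2
    linarith
  · intro lam hlam
    have hlam' : lam ∈ ball (0 : ℂ) r := by
      rw [mem_ball_zero_iff] at *
      linarith
    have hdist := Complex.dist_le_div_mul_dist_of_mapsTo_ball hgd (hmaps.mono_right ball_subset_closedBall) hlam'
    rw [hg0, dist_zero_right, dist_zero_right] at hdist
    have hgl : ‖g lam‖ ≤ 1 / 3 := by
      have h1 : ‖lam‖ ≤ r / 3 := le_of_lt (mem_ball_zero_iff.mp hlam)
      calc ‖g lam‖ ≤ 1 / r * ‖lam‖ := hdist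
        _ ≤ 1 / r * (r / 3) := by
            apply mul_le_mul_of_nonneg_left h1
            positivity
        _ = 1 / 3 := by field_simp
    have heq : ζ lam - a = g lam * (ζ lam + (starRingEnd ℂ) a) :=
      (div_mul_cancel₀ _ (hden lam hlam')).symm
    have h3 : ‖ζ lam + (starRingEnd ℂ) a‖ ≤ ‖ζ lam - a‖ + 2 * a.re := by
      have he : ζ lam + (starRingEnd ℂ) a = (ζ lam - a) + ((2 * a.re : ℝ) : ℂ) := by
        rw [← h2d]; ring
      rw [he]
      refine (norm_add_le _ _).trans ?_
      rw [hnorm2d]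
    have habs : ‖ζ lam - a‖ ≤ a.re := by
      have h4 : ‖ζ lam - a‖ = ‖g lam‖ * ‖ζ lam + (starRingEnd ℂ) a‖ := by
        rw [heq, norm_mul]
      have h4' : ‖g lam‖ * ‖ζ lam + (starRingEnd ℂ) a‖ ≤
          (1 / 3) * (‖ζ lam - a‖ + 2 * a.re) :=
        mul_le_mul hgl h3 (norm_nonneg _) (by norm_num)
      linarith
    have h5 : (ζ lam).re - a.re ≤ ‖ζ lam - a‖ := by
      have := Complex.re_le_norm (ζ lam - a)
      simpa [Complex.sub_re] using this
    linarith

/-- Property (ℱ) implies hyperbolicity: if Ψ : ℂ² → [0,∞) is a nonnegative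
plurisubharmonic function such that for every d > 0 there is r(d) > 0 bounding
the radius of holomorphic disks (with derivative of norm one at the center)
contained in the sublevel set F_d = {Ψ < 2d}, then the rigid domain
Ω_Ψ = {Re ζ > Ψ(z,w)} ⊂ ℂ³ is Kobayashi hyperbolic. -/
theorem stmt_18 (Ψ : ℂ × ℂ → ℝ) (hΨ0 : ∀ p, 0 ≤ Ψ p) (hpsh : PSHOn Ψ Set.univ)
    (hF : ∀ d : ℝ, 0 < d → ∃ rd : ℝ, 0 < rd ∧
      ∀ r : ℝ, ∀ h : ℂ → ℂ × ℂ,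
        DifferentiableOn ℂ h (ball (0 : ℂ) r) →
        ‖deriv h 0‖ = 1 →
        MapsTo h (ball (0 : ℂ) r) {p : ℂ × ℂ | Ψ p < 2 * d} →
        r ≤ rd) :
    KobayashiHyperbolic {p : ℂ × ℂ × ℂ | Ψ (p.1, p.2.1) < p.2.2.re} := by
  intro p hp
  have hp' : Ψ (p.1, p.2.1) < p.2.2.re := hp
  have husc : UpperSemicontinuous Ψ := upperSemicontinuousOn_univ_iff.mp hpsh.1
  set d0 : ℝ := p.2.2.re + 1 with hd0def
  have hd0 : 0 < d0 := by
    have := hΨ0 (p.1, p.2.1); dsimp only [d0]; linarith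
  obtain ⟨rd, hrd, hFd⟩ := hF d0 hd0
  set M : ℝ := max (3 * rd) (2 * d0) with hMdef
  have hM : 0 < M := lt_of_lt_of_le (by linarith) (le_max_left _ _)
  refine ⟨{q : ℂ × ℂ × ℂ | q.2.2.re < d0}, ?_, 1 / M, by positivity, ?_⟩
  · exact (isOpen_lt (Complex.continuous_re.comp (continuous_snd.comp continuous_snd))
      continuous_const).mem_nhds (show p.2.2.re < d0 from lt_add_one _)
  · rintro q ⟨hqU, hqΩ⟩ v
    have hqΩ' : Ψ (q.1, q.2.1) < q.2.2.re := hqΩ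
    have hqU' : q.2.2.re < d0 := hqU
    rw [kob]
    apply le_csInf
    · -- nonemptiness of the defining set
      set y : ℝ := (Ψ (q.1, q.2.1) + q.2.2.re) / 2 with hy
      have hy1 : Ψ (q.1, q.2.1) < y := by dsimp only [y]; linarith
      have hy2 : y < q.2.2.re := by dsimp only [y]; linarith
      have h1 : ∀ᶠ q' : ℂ × ℂ × ℂ in nhds q, Ψ (q'.1, q'.2.1) < y := by
        have hc : ContinuousAt (fun q' : ℂ × ℂ × ℂ => (q'.1, q'.2.1)) q := by fun_prop
        exact hc.eventually (husc (q.1, q.2.1) y hy1)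
      have h2 : ∀ᶠ q' : ℂ × ℂ × ℂ in nhds q, y < q'.2.2.re :=
        (isOpen_lt continuous_const (Complex.continuous_re.comp
          (continuous_snd.comp continuous_snd))).eventually_mem hy2
      obtain ⟨ε, hε, hball⟩ := Metric.eventually_nhds_iff_ball.mp (h1.and h2)
      set δ : ℝ := ε / (‖v‖ + 1) with hδ
      have hδpos : 0 < δ := by positivity
      have hfd : HasDerivAt (fun lam : ℂ => q + lam • v) v 0 := by
        simpa using ((hasDerivAt_id (0 : ℂ)).smul_const v).const_add q
      refine ⟨1 / δ, δ, hδpos, rfl, fun lam => q + lam • v, ?_, by simp, hfd.deriv, ?_⟩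
      · intro lam _
        exact (((hasDerivAt_id lam).smul_const v).const_add
          q).differentiableAt.differentiableWithinAt
      · intro lam hlam
        have hmem : q + lam • v ∈ ball q ε := by
          rw [mem_ball, dist_eq_norm]
          have he : q + lam • v - q = lam • v := by abel
          rw [he, norm_smul]
          have hl : ‖lam‖ < δ := mem_ball_zero_iff.mp hlam
          calc ‖lam‖ * ‖v‖ ≤ ‖lam‖ * (‖v‖ + 1) := by
                nlinarith [norm_nonneg lam, norm_nonneg v]
            _ < δ * (‖v‖ + 1) := by nlinarith [norm_nonneg v]
            _ = ε := by rw [hδ, div_mul_cancel₀ _ (by positivity)]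
        have hb := hball _ hmem
        exact lt_trans hb.1 hb.2
    · rintro b ⟨r, hr, rfl, f, hdf, hf0, hderiv, hmaps⟩
      suffices key : r * ‖v‖ ≤ M by
        rw [div_mul_eq_mul_div, div_le_div_iff₀ hM hr]
        nlinarith [norm_nonneg v]
      have h0r : (0 : ℂ) ∈ ball (0 : ℂ) r := mem_ball_self hr
      have hfat : HasDerivAt f v 0 := by
        have := (hdf.differentiableAt (isOpen_ball.mem_nhds h0r)).hasDerivAt
        rwa [hderiv] at this
      set ζ : ℂ → ℂ := fun lam => (f lam).2.2 with hζdef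
      have hζdiff : DifferentiableOn ℂ ζ (ball 0 r) :=
        fun lam hlam => ((hdf lam hlam).snd).snd
      have hζpos : ∀ lam ∈ ball (0 : ℂ) r, 0 < (ζ lam).re :=
        fun lam hlam => lt_of_le_of_lt (hΨ0 _) (hmaps hlam)
      have hζd : HasDerivAt ζ v.2.2 0 := by
        have hcd := ((ContinuousLinearMap.snd ℂ ℂ ℂ).comp
          (ContinuousLinearMap.snd ℂ ℂ (ℂ × ℂ))).hasFDerivAt.comp_hasDerivAt (0 : ℂ) hfat
        exact hcd
      obtain ⟨hζ1, hζ2⟩ := halfplane_est hr ζ hζdiff hζpos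
      rw [hζd.deriv] at hζ1
      have hζ00 : (ζ 0).re = q.2.2.re := by rw [hζdef]; simp [hf0]
      rw [hζ00] at hζ1 hζ2
      set h : ℂ → ℂ × ℂ := fun lam => ((f lam).1, (f lam).2.1) with hhdef
      have hhd : HasDerivAt h (v.1, v.2.1) 0 := by
        have hcd := ((ContinuousLinearMap.fst ℂ ℂ (ℂ × ℂ)).prod
          ((ContinuousLinearMap.fst ℂ ℂ ℂ).comp
            (ContinuousLinearMap.snd ℂ ℂ (ℂ × ℂ)))).hasFDerivAt.comp_hasDerivAt (0 : ℂ) hfat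
        exact hcd
      have hsub : ball (0 : ℂ) (r / 3) ⊆ ball (0 : ℂ) r := by
        apply ball_subset_ball; linarith
      have hhdiff : DifferentiableOn ℂ h (ball 0 (r / 3)) :=
        fun lam hlam =>
          (DifferentiableWithinAt.prodMk ((hdf lam (hsub hlam)).fst) ((hdf lam (hsub hlam)).snd.fst)).mono hsub
      have hmaps3 : MapsTo h (ball (0 : ℂ) (r / 3)) {p : ℂ × ℂ | Ψ p < 2 * d0} := by
        intro lam hlam
        have hΨlt : Ψ (h lam) < (ζ lam).re := hmaps (hsub hlam)
        have h2 := hζ2 lam hlam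
        show Ψ (h lam) < 2 * d0
        linarith
      have hrs : r * ‖(v.1, v.2.1)‖ ≤ 3 * rd := by
        rcases eq_or_lt_of_le (norm_nonneg ((v.1, v.2.1) : ℂ × ℂ)) with h0 | hspos
        · rw [← h0, mul_zero]; positivity
        · have hsne : ((‖(v.1, v.2.1)‖ : ℝ) : ℂ) ≠ 0 := by
            simp only [ne_eq, Complex.ofReal_eq_zero]
            exact ne_of_gt hspos
          set c : ℂ := ((‖(v.1, v.2.1)‖ : ℝ) : ℂ)⁻¹ with hc
          have hnc : ‖c‖ = ‖(v.1, v.2.1)‖⁻¹ := by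
            rw [hc, norm_inv, Complex.norm_real, Real.norm_of_nonneg hspos.le]
          have hlin : HasDerivAt (fun lam : ℂ => c * lam) c 0 := by
            simpa using (hasDerivAt_id (0 : ℂ)).const_mul c
          have hcomp : HasDerivAt (fun lam : ℂ => h (c * lam)) (c • (v.1, v.2.1)) 0 := by
            have := hhd.scomp_of_eq 0 hlin (by simp)
            simpa [Function.comp_def] using this
          have hnorm1 : ‖deriv (fun lam : ℂ => h (c * lam)) 0‖ = 1 := by
            rw [hcomp.deriv, norm_smul, hnc]
            field_simp
          have hm : MapsTo (fun lam : ℂ => c * lam)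
              (ball (0 : ℂ) (‖(v.1, v.2.1)‖ * (r / 3))) (ball (0 : ℂ) (r / 3)) := by
            intro lam hlam
            rw [mem_ball_zero_iff] at *
            rw [norm_mul, hnc]
            calc ‖(v.1, v.2.1)‖⁻¹ * ‖lam‖
                < ‖(v.1, v.2.1)‖⁻¹ * (‖(v.1, v.2.1)‖ * (r / 3)) :=
                  mul_lt_mul_of_pos_left hlam (by positivity)
              _ = r / 3 := by field_simp
          have hdm : Differentiable ℂ (fun lam : ℂ => c * lam) :=
            differentiable_id.const_mul c
          have hdiff' : DifferentiableOn ℂ (fun lam : ℂ => h (c * lam))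
              (ball (0 : ℂ) (‖(v.1, v.2.1)‖ * (r / 3))) :=
            hhdiff.comp hdm.differentiableOn hm
          have hle := hFd (‖(v.1, v.2.1)‖ * (r / 3)) (fun lam : ℂ => h (c * lam))
            hdiff' hnorm1 (hmaps3.comp hm)
          linarith
      have hvnorm : ‖v‖ = max ‖(v.1, v.2.1)‖ ‖v.2.2‖ := by
        have h1 : ‖v‖ = max ‖v.1‖ (max ‖v.2.1‖ ‖v.2.2‖) := rfl
        have h2 : ‖((v.1, v.2.1) : ℂ × ℂ)‖ = max ‖v.1‖ ‖v.2.1‖ := rfl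
        rw [h1, h2, max_assoc]
      rw [hvnorm, mul_max_of_nonneg _ _ hr.le]
      apply max_le
      · exact le_trans hrs (le_max_left _ _)
      · have hv3 : r * ‖v.2.2‖ ≤ 2 * q.2.2.re := by
          calc r * ‖v.2.2‖ = ‖v.2.2‖ * r := mul_comm _ _
            _ ≤ 2 * q.2.2.re := hζ1
        exact le_trans (by linarith) (le_max_right _ _)
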